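/- For every real number x, cos(πx) = Σ_{j=1}^∞ t_j π^{2j} (1/4 − x²)^j, where the series converges (absolutely). -/

import Mathlib

open Real

/-- The summand `a_{j,k} = (-π²/4)^k / (2j+2k)! · C(j+k, j)`. -/
noncomputable def a (j k : ℕ) : ℝ :=
  (-(π ^ 2) / 4) ^ k / (Nat.factorial (2 * j + 2 * k)) * (Nat.choose (j + k) j)

/-- `t_j = Σ_{k=0}^∞ a_{j,k}`. -/
noncomputable def t (j : ℕ) : ℝ := ∑' k : ℕ, a j k

lemma choose_le_two_pow' (n j : ℕ) (h : j ≤ n) : (n.choose j : ℝ) ≤ 2 ^ n := by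
  have h1 : n.choose j ≤ ∑ m ∈ Finset.range (n + 1), n.choose m :=
    Finset.single_le_sum (fun i _ => Nat.zero_le _) (Finset.mem_range.mpr (Nat.lt_succ_of_le h))
  rw [Nat.sum_range_choose] at h1
  exact_mod_cast h1

lemma fact_fact_le (j k : ℕ) : ((Nat.factorial j * Nat.factorial k : ℕ) : ℝ) ≤ (Nat.factorial (2 * j + 2 * k)) := by
  have h1 : Nat.factorial j * Nat.factorial k ∣ Nat.factorial (j + k) := Nat.factorial_mul_factorial_dvd_factorial_add j k
  have h2 : Nat.factorial j * Nat.factorial k ≤ Nat.factorial (j + k) := Nat.le_of_dvd (Nat.factorial_pos _) h1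
  have h3 : Nat.factorial (j + k) ≤ Nat.factorial (2 * j + 2 * k) := Nat.factorial_le (by omega)
  exact_mod_cast h2.trans h3

lemma summable_F (u : ℝ) :
    Summable (fun p : ℕ × ℕ => a p.1 p.2 * π ^ (2 * p.1) * u ^ p.1) := by
  rw [← summable_abs_iff]
  have hg : Summable fun j : ℕ => (2 * π ^ 2 * |u|) ^ j / Nat.factorial j :=
    Real.summable_pow_div_factorial _
  have hh : Summable fun k : ℕ => (π ^ 2 / 2) ^ k / Nat.factorial k :=
    Real.summable_pow_div_factorial _
  have hprod : Summable fun p : ℕ × ℕ =>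
      ((2 * π ^ 2 * |u|) ^ p.1 / Nat.factorial p.1) * ((π ^ 2 / 2) ^ p.2 / Nat.factorial p.2) :=
    hg.mul_of_nonneg hh (fun j => by positivity) (fun k => by positivity)
  refine hprod.of_nonneg_of_le (fun p => abs_nonneg _) ?_
  rintro ⟨j, k⟩
  have hπ : (0 : ℝ) < π := Real.pi_pos
  have habs : |a j k * π ^ (2 * j) * u ^ j|
      = (π ^ 2 / 4) ^ k / (Nat.factorial (2 * j + 2 * k)) * ((j + k).choose j : ℕ)
        * π ^ (2 * j) * |u| ^ j := by
    simp only [a, abs_mul, abs_div, abs_pow, abs_neg, Nat.abs_cast,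
      abs_of_nonneg hπ.le, abs_of_nonneg (show (0:ℝ) ≤ 4 by norm_num)]
  rw [habs]
  have step1 : (π ^ 2 / 4) ^ k / (Nat.factorial (2 * j + 2 * k)) * ((j + k).choose j : ℕ)
        * π ^ (2 * j) * |u| ^ j
      ≤ (π ^ 2 / 4) ^ k / ((Nat.factorial j * Nat.factorial k : ℕ) : ℝ) * ((2 : ℝ) ^ (j + k))
        * π ^ (2 * j) * |u| ^ j := by
    have h1 : (((j + k).choose j : ℕ) : ℝ) ≤ (2 : ℝ) ^ (j + k) :=
      choose_le_two_pow' (j + k) j (Nat.le_add_right _ _)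
    have h2 : ((Nat.factorial j * Nat.factorial k : ℕ) : ℝ) ≤ ((Nat.factorial (2 * j + 2 * k)) : ℝ) := fact_fact_le j k
    have h3 : (0 : ℝ) < ((Nat.factorial j * Nat.factorial k : ℕ) : ℝ) := by positivity
    gcongr
  refine step1.trans (le_of_eq ?_)
  have hjk : ((Nat.factorial j * Nat.factorial k : ℕ) : ℝ) = (Nat.factorial j : ℝ) * (Nat.factorial k : ℝ) := by push_cast; ring
  rw [hjk, pow_add, pow_mul]
  have hj : (Nat.factorial j : ℝ) ≠ 0 := by positivity
  have hk : (Nat.factorial k : ℝ) ≠ 0 := by positivity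
  field_simp
  rw [show (π ^ 2 / 4) ^ k * 2 ^ j * 2 ^ k = (π ^ 2 / 4 * 2) ^ k * 2 ^ j by rw [mul_pow]; ring,
    show π ^ 2 / 4 * 2 = π ^ 2 / 2 by ring]
  ring

lemma summable_a (j : ℕ) : Summable (fun k => a j k) := by
  have h := (summable_F 1).prod_factor j
  simp only [one_pow, mul_one] at h
  have h2 := h.mul_right (π ^ (2 * j))⁻¹
  have hπ : (π : ℝ) ^ (2 * j) ≠ 0 := by positivity
  simpa [mul_assoc, mul_inv_cancel₀ hπ] using h2

lemma t_zero : t 0 = 0 := by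
  have h := Real.cos_eq_tsum (π / 2)
  rw [Real.cos_pi_div_two] at h
  have key : t 0 = ∑' n : ℕ, (-1) ^ n * (π / 2) ^ (2 * n) / (Nat.factorial (2 * n)) := by
    refine tsum_congr fun n => ?_
    simp only [a, Nat.zero_add, Nat.choose_zero_right, Nat.cast_one, mul_one, Nat.mul_zero,
      Nat.zero_add, zero_add, Nat.cast_ofNat, mul_zero]
    congr 1
    rw [pow_mul, ← mul_pow]
    congr 1
    ring
  rw [key, ← h]

lemma hasSum_main (x : ℝ) :
    HasSum (fun j : ℕ => t j * π ^ (2 * j) * (1 / 4 - x ^ 2) ^ j) (Real.cos (π * x)) := by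
  set u : ℝ := 1 / 4 - x ^ 2 with hu
  have hF := summable_F u
  set F := fun p : ℕ × ℕ => a p.1 p.2 * π ^ (2 * p.1) * u ^ p.1 with hFdef
  have hfib : ∀ j : ℕ, HasSum (fun k => F (j, k)) (t j * π ^ (2 * j) * u ^ j) := by
    intro j
    have h1 : HasSum (fun k => a j k * (π ^ (2 * j) * u ^ j))
        (t j * (π ^ (2 * j) * u ^ j)) := (summable_a j).hasSum.mul_right _
    simpa [F, mul_assoc] using h1
  have hmain : HasSum (fun j : ℕ => t j * π ^ (2 * j) * u ^ j) (∑' p : ℕ × ℕ, F p) :=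
    hF.hasSum.prod_fiberwise hfib
  have key : ∑' p : ℕ × ℕ, F p = Real.cos (π * x) := by
    rw [Real.cos_eq_tsum (π * x)]
    rw [← Finset.HasAntidiagonal.sigmaAntidiagonalEquivProd.tsum_eq F]
    have hsig : Summable fun c : (Σ n : ℕ, (Finset.HasAntidiagonal.antidiagonal n : Finset (ℕ × ℕ))) =>
        F (Finset.HasAntidiagonal.sigmaAntidiagonalEquivProd c) :=
      Finset.HasAntidiagonal.sigmaAntidiagonalEquivProd.summable_iff.mpr hF
    rw [hsig.tsum_sigma]
    refine tsum_congr fun n => ?_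
    have hfin : ∑' (p : (Finset.HasAntidiagonal.antidiagonal n : Finset (ℕ × ℕ))),
        F (Finset.HasAntidiagonal.sigmaAntidiagonalEquivProd ⟨n, p⟩)
        = ∑ p ∈ Finset.HasAntidiagonal.antidiagonal n, F p :=
      Finset.tsum_subtype (Finset.HasAntidiagonal.antidiagonal n) F
    rw [hfin]
    rw [Finset.Nat.sum_antidiagonal_eq_sum_range_succ_mk]
    have h1 : ∀ k ∈ Finset.range (n + 1),
        F (k, n - k) = (π ^ 2 * u) ^ k * (-(π ^ 2) / 4) ^ (n - k) * (n.choose k : ℕ)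
          / (Nat.factorial (2 * n)) := by
      intro k hk
      have hk' : k ≤ n := Nat.lt_succ_iff.mp (Finset.mem_range.mp hk)
      simp only [F, a]
      rw [Nat.add_sub_cancel' hk', show 2 * k + 2 * (n - k) = 2 * n from by omega]
      rw [mul_pow, pow_mul]
      ring
    rw [Finset.sum_congr rfl h1, ← Finset.sum_div]
    have h2 : ∑ k ∈ Finset.range (n + 1),
        (π ^ 2 * u) ^ k * (-(π ^ 2) / 4) ^ (n - k) * (n.choose k : ℕ)
        = (π ^ 2 * u + -(π ^ 2) / 4) ^ n := (add_pow _ _ n).symm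
    rw [h2]
    have h3 : π ^ 2 * u + -(π ^ 2) / 4 = -(π * x) ^ 2 := by rw [hu]; ring
    rw [h3, neg_pow, ← pow_mul]
  rw [key] at hmain
  exact hmain

/-- For every real `x`, `cos (π x) = Σ_{j=1}^∞ t_j π^{2j} (1/4 − x²)^j`,
the series converging absolutely. -/
theorem cos_eq_tsum (x : ℝ) :
    Summable (fun j : ℕ => |t (j + 1) * π ^ (2 * (j + 1)) * (1 / 4 - x ^ 2) ^ (j + 1)|) ∧
    Real.cos (π * x) = ∑' j : ℕ, t (j + 1) * π ^ (2 * (j + 1)) * (1 / 4 - x ^ 2) ^ (j + 1) := by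
  have hg := hasSum_main x
  have hsum : Summable (fun j : ℕ => t j * π ^ (2 * j) * (1 / 4 - x ^ 2) ^ j) := hg.summable
  have hshift : Summable (fun j : ℕ => t (j + 1) * π ^ (2 * (j + 1)) * (1 / 4 - x ^ 2) ^ (j + 1)) :=
    (summable_nat_add_iff 1).mpr hsum
  refine ⟨summable_abs_iff.mpr hshift, ?_⟩
  have h0 : t 0 * π ^ (2 * 0) * (1 / 4 - x ^ 2) ^ 0 = 0 := by simp [t_zero]
  rw [← hg.tsum_eq, hsum.tsum_eq_zero_add, h0, zero_add]
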